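/- Let G and H be real-valued real analytic functions defined on open intervals about θ_0 and 0 respectively. Assume that the vanishing order k of G - G(θ_0) at θ_0 is finite (1 ≤ k < ∞), and that H(t_j) = G(θ_j) for sequences t_j > 0 with t_j → 0 and θ_j → θ_0. Then there exist a real analytic function h defined on an open interval about 0 and a subsequence {j_n} such that θ_{j_n} = h(t_{j_n}^{1/k}) for all n. -/

import Mathlib

open Set Filter Topology

noncomputable section

private lemma analyticAt_rlog {x : ℝ} (hx : 0 < x) : AnalyticAt ℝ Real.log x := by
  have h1 : AnalyticAt ℝ (fun y : ℝ => (Complex.log (y : ℂ)).re) x :=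
    (Complex.reCLM.analyticAt _).comp
      (((analyticAt_clog (Complex.ofReal_mem_slitPlane.2 hx)).restrictScalars).comp
        (Complex.ofRealCLM.analyticAt x))
  apply h1.congr
  filter_upwards [eventually_gt_nhds hx] with y hy
  rw [← Complex.ofReal_log hy.le, Complex.ofReal_re]

private lemma exists_kth_root {w : ℝ → ℝ} {x : ℝ} (hw : AnalyticAt ℝ w x) (hpos : 0 < w x)
    {k : ℕ} (hk : k ≠ 0) :
    ∃ ρ : ℝ → ℝ, AnalyticAt ℝ ρ x ∧ (∀ y, 0 < ρ y) ∧ ∀ᶠ y in 𝓝 x, ρ y ^ k = w y := by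
  refine ⟨fun y => Real.exp (Real.log (w y) / k), ?_, fun y => Real.exp_pos _, ?_⟩
  · exact analyticAt_rexp.comp ((((analyticAt_rlog hpos).comp hw)).mul analyticAt_const)
  · filter_upwards [hw.continuousAt.eventually (eventually_gt_nhds hpos)] with y hy
    rw [← Real.exp_nat_mul, mul_div_cancel₀ _ (by exact_mod_cast hk), Real.exp_log hy]

private lemma coeff_factorial {g : ℝ → ℝ} {x : ℝ} {p : FormalMultilinearSeries ℝ ℝ ℝ}
    (hp : HasFPowerSeriesAt g p x) (n : ℕ) :
    (n.factorial : ℝ) * p.coeff n = iteratedDeriv n g x := by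
  obtain ⟨r, hr⟩ := hp
  have h := hr.factorial_smul (1 : ℝ) n
  rw [iteratedDeriv_eq_iteratedFDeriv, ← h]
  rw [FormalMultilinearSeries.coeff, nsmul_eq_mul]
  norm_num

private lemma factor_aux {g : ℝ → ℝ} {x : ℝ} {p : FormalMultilinearSeries ℝ ℝ ℝ}
    (hp : HasFPowerSeriesAt g p x) (hp0 : p ≠ 0) :
    ∃ u : ℝ → ℝ, AnalyticAt ℝ u x ∧ u x ≠ 0 ∧
      ∀ᶠ y in 𝓝 x, g y = (y - x) ^ p.order * u y := by
  refine ⟨(Function.swap dslope x)^[p.order] g,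
    ⟨_, hp.has_fpower_series_iterate_dslope_fslope p.order⟩,
    hp.iterate_dslope_fslope_ne_zero hp0, ?_⟩
  exact Filter.Eventually.of_forall (by simpa [smul_eq_mul] using hp.eq_pow_order_mul_iterate_dslope)

private lemma exists_local_inverse {F : ℝ → ℝ} {x : ℝ} (hF : AnalyticAt ℝ F x)
    (hd : deriv F x ≠ 0) :
    ∃ Finv : ℝ → ℝ, AnalyticAt ℝ Finv (F x) ∧ ∀ᶠ y in 𝓝 x, Finv (F y) = y := by
  obtain ⟨p, hp⟩ := id hF
  set i : ℝ ≃L[ℝ] ℝ := ContinuousLinearEquiv.unitsEquivAut ℝ (Units.mk0 _ hd) with hi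
  have hder : HasFDerivAt F (i : ℝ →L[ℝ] ℝ) x := by
    have h1 : HasDerivAt F (deriv F x) x := hF.differentiableAt.hasDerivAt
    have h2 := h1.hasFDerivAt
    have h3 : (i : ℝ →L[ℝ] ℝ) = ContinuousLinearMap.smulRight (1 : ℝ →L[ℝ] ℝ) (deriv F x) := by
      refine ContinuousLinearMap.ext fun y => ?_
      simp [hi, ContinuousLinearEquiv.unitsEquivAut_apply, mul_comm]
    rw [h3]
    exact h2
  have hstrict : HasStrictFDerivAt F (i : ℝ →L[ℝ] ℝ) x :=
    (hF.contDiffAt (n := 1)).hasStrictFDerivAt' hder one_ne_zero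
  set Φ := hstrict.toOpenPartialHomeomorph F with hΦ
  have hcoe : ⇑Φ = F := hstrict.toOpenPartialHomeomorph_coe
  have hsrc : x ∈ Φ.source := hstrict.mem_toOpenPartialHomeomorph_source
  have hp1 : p 1 = (continuousMultilinearCurryFin1 ℝ ℝ ℝ).symm (i : ℝ →L[ℝ] ℝ) := by
    suffices hnew : (continuousMultilinearCurryFin1 ℝ ℝ ℝ) (p 1) = (i : ℝ →L[ℝ] ℝ) by
      rw [← hnew, LinearIsometryEquiv.symm_apply_apply]
    refine ContinuousLinearMap.ext fun y => ?_
    have hco : deriv F x = p.coeff 1 := hp.deriv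
    have h4 : (Fin.snoc 0 y : Fin 1 → ℝ) = fun j : Fin 1 => y • (fun _ : Fin 1 => (1 : ℝ)) j := by
      funext j; fin_cases j; simp [Fin.snoc]
    rw [continuousMultilinearCurryFin1_apply, h4, (p 1).map_smul_univ]
    simp only [hi, ContinuousLinearEquiv.unitsEquivAut_apply, Units.val_mk0, smul_eq_mul,
      Finset.prod_const, Finset.card_univ, Fintype.card_fin, pow_one]
    rw [show (p 1) (fun _ : Fin 1 => (1 : ℝ)) = p.coeff 1 from rfl, ← hco]
    rfl
  have hsymm := Φ.hasFPowerSeriesAt_symm hsrc (by rwa [hcoe]) hp1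
  refine ⟨Φ.symm, ?_, ?_⟩
  · rw [show F x = Φ x by rw [hcoe]]
    exact ⟨_, hsymm⟩
  · filter_upwards [Φ.open_source.mem_nhds hsrc] with y hy
    rw [← hcoe]
    exact Φ.left_inv hy

/-- Lemma: let `G`, `H` be real analytic near `θ₀` and `0`, suppose `G - G(θ₀)`
vanishes to finite order `k` at `θ₀`, and `H(t_j) = G(θ_j)` with `t_j > 0`,
`t_j → 0`, `θ_j → θ₀`. Then along a subsequence, `θ_{j_n} = h(t_{j_n}^{1/k})`
for some real analytic function `h` near `0`. -/
theorem analytic_reparametrization_of_preimages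
    (G H : ℝ → ℝ) (θ₀ : ℝ) (δG δH : ℝ) (hδG : 0 < δG) (hδH : 0 < δH)
    (hG : AnalyticOnNhd ℝ G (Set.Ioo (θ₀ - δG) (θ₀ + δG)))
    (hH : AnalyticOnNhd ℝ H (Set.Ioo (-δH) δH))
    (k : ℕ) (hk : 1 ≤ k)
    (hvanish : ∀ i : ℕ, 1 ≤ i → i < k →
      iteratedDeriv i (fun θ => G θ - G θ₀) θ₀ = 0)
    (hnonzero : iteratedDeriv k (fun θ => G θ - G θ₀) θ₀ ≠ 0)
    (t θ : ℕ → ℝ) (htpos : ∀ j, 0 < t j)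
    (ht : Tendsto t atTop (𝓝 0)) (hθ : Tendsto θ atTop (𝓝 θ₀))
    (heq : ∀ j, H (t j) = G (θ j)) :
    ∃ (h : ℝ → ℝ) (ε : ℝ), 0 < ε ∧ AnalyticOnNhd ℝ h (Set.Ioo (-ε) ε) ∧
      ∃ φ : ℕ → ℕ, StrictMono φ ∧ ∀ n : ℕ,
        t (φ n) ^ ((k : ℝ)⁻¹) ∈ Set.Ioo (-ε) ε ∧
        θ (φ n) = h (t (φ n) ^ ((k : ℝ)⁻¹)) := by
  have hkne : k ≠ 0 := by omega
  have hk0 : (k : ℝ) ≠ 0 := Nat.cast_ne_zero.2 hkne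
  have hki : (0 : ℝ) < (k : ℝ)⁻¹ := by positivity
  have htk : Tendsto (fun j => t j ^ ((k : ℝ)⁻¹)) atTop (𝓝 0) := by
    have h1 := ht.rpow_const (p := (k : ℝ)⁻¹) (Or.inr hki.le)
    simpa [Real.zero_rpow hki.ne'] using h1
  have hsk : ∀ j, (t j ^ ((k : ℝ)⁻¹)) ^ k = t j := fun j => by
    rw [← Real.rpow_natCast (t j ^ ((k : ℝ)⁻¹)) k, ← Real.rpow_mul (htpos j).le,
      inv_mul_cancel₀ hk0, Real.rpow_one]
  by_cases hfreq : ∃ᶠ j in atTop, θ j = θ₀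
  · -- easy case: θ j = θ₀ frequently; take the constant function
    refine ⟨fun _ => θ₀, 1, one_pos, fun y _ => analyticAt_const, ?_⟩
    have hev : ∀ᶠ j in atTop, t j ^ ((k : ℝ)⁻¹) ∈ Set.Ioo (-1 : ℝ) 1 :=
      htk.eventually (Ioo_mem_nhds (by norm_num) (by norm_num))
    obtain ⟨φ, hφ, hP⟩ := Filter.extraction_of_frequently_atTop (hfreq.and_eventually hev)
    exact ⟨φ, hφ, fun n => ⟨(hP n).2, (hP n).1⟩⟩
  · rw [not_frequently] at hfreq
    -- the function g = G - G θ₀ at θ₀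
    have hθ₀mem : θ₀ ∈ Set.Ioo (θ₀ - δG) (θ₀ + δG) := ⟨by linarith, by linarith⟩
    have hGθ : AnalyticAt ℝ G θ₀ := hG θ₀ hθ₀mem
    have hganal : AnalyticAt ℝ (fun y => G y - G θ₀) θ₀ := hGθ.sub analyticAt_const
    obtain ⟨p, hp⟩ := id hganal
    have hcoeff := coeff_factorial hp
    have hck : p.coeff k ≠ 0 := by
      intro h
      exact hnonzero (by rw [← hcoeff k, h, mul_zero])
    have hpne : p ≠ 0 := by
      intro h
      apply hck
      rw [FormalMultilinearSeries.coeff, h]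
      rfl
    have hordk : p.order = k := by
      have hle : p.order ≤ k :=
        Nat.sInf_le (by simpa using fun h => hck (FormalMultilinearSeries.coeff_eq_zero.mpr h))
      rcases lt_or_eq_of_le hle with hlt | he
      · exfalso
        have h1 : p p.order ≠ 0 := p.apply_order_ne_zero hpne
        apply h1
        rw [← FormalMultilinearSeries.coeff_eq_zero]
        rcases Nat.eq_zero_or_pos p.order with h0 | h0
        · rw [h0]
          have h2 := hp.coeff_zero 1
          rw [FormalMultilinearSeries.coeff, h2]
          simp
        · have h2 := hvanish p.order h0 hlt
          have h3 := hcoeff p.order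
          rw [h2] at h3
          have h4 : (p.order.factorial : ℝ) ≠ 0 := Nat.cast_ne_zero.2 p.order.factorial_ne_zero
          exact (mul_eq_zero.mp h3).resolve_left h4
      · exact he
    obtain ⟨u, hu_an, hu_ne, hgu⟩ := factor_aux hp hpne
    rw [hordk] at hgu
    -- sign and k-th root of s * u
    set s : ℝ := if 0 < u θ₀ then 1 else -1 with hs_def
    have hs1 : s = 1 ∨ s = -1 := by
      rw [hs_def]; split_ifs <;> simp
    have hss : s * s = 1 := by rcases hs1 with h | h <;> rw [h] <;> norm_num
    have hsu : 0 < s * u θ₀ := by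
      rw [hs_def]
      split_ifs with h
      · simpa using h
      · have : u θ₀ < 0 := lt_of_le_of_ne (not_lt.mp h) hu_ne
        nlinarith
    obtain ⟨v, hv_an, hv_pos, hv⟩ := exists_kth_root (analyticAt_const.mul hu_an) hsu hkne
    -- F y = (y - θ₀) * v y
    set F : ℝ → ℝ := fun y => (y - θ₀) * v y with hF_def
    have hF_an : AnalyticAt ℝ F θ₀ := (analyticAt_id.sub analyticAt_const).mul hv_an
    have hF0 : F θ₀ = 0 := by simp [hF_def]
    have hFq : HasDerivAt F (v θ₀) θ₀ := by
      have h1 : HasDerivAt (fun y : ℝ => y - θ₀) 1 θ₀ := (hasDerivAt_id θ₀).sub_const θ₀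
      have h2 : HasDerivAt v (deriv v θ₀) θ₀ := hv_an.differentiableAt.hasDerivAt
      have h3 := h1.mul h2
      exact (by simpa using h3 : HasDerivAt ((fun y : ℝ => y - θ₀) * v) (v θ₀) θ₀)
    have hFd : deriv F θ₀ ≠ 0 := by rw [hFq.deriv]; exact (hv_pos θ₀).ne'
    obtain ⟨Finv, hFinv_an, hFinv_eq⟩ := exists_local_inverse hF_an hFd
    rw [hF0] at hFinv_an
    have hFk : ∀ᶠ y in 𝓝 θ₀, F y ^ k = s * (G y - G θ₀) := by
      filter_upwards [hgu, hv] with y h1 h2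
      calc ((y - θ₀) * v y) ^ k = (y - θ₀) ^ k * (v y) ^ k := mul_pow _ _ _
        _ = (y - θ₀) ^ k * (s * u y) := by rw [h2]; rfl
        _ = s * ((y - θ₀) ^ k * u y) := by ring
        _ = s * (G y - G θ₀) := by rw [← h1]
    -- the function f = H - G θ₀ at 0
    have h0mem : (0 : ℝ) ∈ Set.Ioo (-δH) δH := ⟨by linarith, hδH⟩
    have hHanal : AnalyticAt ℝ H 0 := hH 0 h0mem
    have hfanal : AnalyticAt ℝ (fun τ => H τ - G θ₀) 0 := hHanal.sub analyticAt_const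
    obtain ⟨q, hq⟩ := id hfanal
    have hu_ev : ∀ᶠ y in 𝓝 θ₀, u y ≠ 0 := hu_an.continuousAt.eventually_ne hu_ne
    have hfne : ∀ᶠ j in atTop, H (t j) - G θ₀ ≠ 0 := by
      filter_upwards [hθ.eventually hgu, hθ.eventually hu_ev, hfreq] with j h1 h2 h3
      rw [heq j, h1]
      exact mul_ne_zero (pow_ne_zero _ (sub_ne_zero.mpr h3)) h2
    have hqne : q ≠ 0 := by
      intro h
      have hz : ∀ᶠ τ in 𝓝 0, H τ - G θ₀ = 0 := hq.locally_zero_iff.mpr h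
      obtain ⟨j, h1, h2⟩ := (hfne.and (ht.eventually hz)).exists
      exact h1 h2
    obtain ⟨w, hw_an, hw_ne, hfw⟩ := factor_aux hq hqne
    set m := q.order with hm_def
    have hfw' : ∀ᶠ τ in 𝓝 (0 : ℝ), H τ - G θ₀ = τ ^ m * w τ := by
      filter_upwards [hfw] with τ h1
      simpa using h1
    -- H 0 = G θ₀ and m ≥ 1
    have hH0 : H 0 - G θ₀ = 0 := by
      have l1 : Tendsto (fun j => H (t j)) atTop (𝓝 (H 0)) := hHanal.continuousAt.tendsto.comp ht
      have l2 : Tendsto (fun j => G (θ j)) atTop (𝓝 (G θ₀)) := hGθ.continuousAt.tendsto.comp hθ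
      have h1 : H 0 = G θ₀ := tendsto_nhds_unique (l1.congr fun j => heq j) l2
      rw [h1, sub_self]
    have hm1 : 1 ≤ m := by
      by_contra hc
      have hm0 : m = 0 := by omega
      have h1 := hfw'.self_of_nhds
      rw [hH0, hm0] at h1
      simp at h1
      exact hw_ne h1.symm
    -- sign and k-th root of σ * (s * w)
    have hsne : s ≠ 0 := by rcases hs1 with h | h <;> rw [h] <;> norm_num
    set σ : ℝ := if 0 < s * w 0 then 1 else -1 with hσ_def
    have hσ1 : σ = 1 ∨ σ = -1 := by rw [hσ_def]; split_ifs <;> simp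
    have hσσ : σ * σ = 1 := by rcases hσ1 with h | h <;> rw [h] <;> norm_num
    have hσpos : 0 < σ * (s * w 0) := by
      rw [hσ_def]
      split_ifs with h
      · simpa using h
      · have h2 : s * w 0 ≠ 0 := mul_ne_zero hsne hw_ne
        have : s * w 0 < 0 := lt_of_le_of_ne (not_lt.mp h) h2
        nlinarith
    obtain ⟨ρ, hρ_an, hρ_pos, hρ⟩ :=
      exists_kth_root (analyticAt_const.mul (analyticAt_const.mul hw_an)) hσpos hkne
    -- A j and the key identity F (θ j) ^ k = σ * (A j) ^ k
    set A : ℕ → ℝ := fun j => (t j ^ ((k : ℝ)⁻¹)) ^ m * ρ (t j) with hA_def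
    have hApos : ∀ j, 0 < A j := fun j =>
      mul_pos (pow_pos (Real.rpow_pos_of_pos (htpos j) ((k : ℝ)⁻¹)) m) (hρ_pos _)
    have hkey : ∀ᶠ j in atTop, F (θ j) ^ k = σ * A j ^ k := by
      filter_upwards [hθ.eventually hFk, ht.eventually hfw', ht.eventually hρ] with j h1 h2 h3
      have e1 : F (θ j) ^ k = s * (H (t j) - G θ₀) := by rw [h1, heq j]
      have e2 : s * w (t j) = σ * ρ (t j) ^ k := by
        rw [h3]
        show s * w (t j) = σ * (σ * (s * w (t j)))
        linear_combination (-(s * w (t j))) * hσσ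
      have e3 : A j ^ k = t j ^ m * ρ (t j) ^ k := by
        rw [hA_def]
        rw [mul_pow, ← pow_mul, mul_comm m k, pow_mul, hsk j]
      rw [e1, h2, e3]
      calc s * (t j ^ m * w (t j)) = t j ^ m * (s * w (t j)) := by ring
        _ = t j ^ m * (σ * ρ (t j) ^ k) := by rw [e2]
        _ = σ * (t j ^ m * ρ (t j) ^ k) := by ring
    have habs : ∀ᶠ j in atTop, F (θ j) = A j ∨ F (θ j) = -A j := by
      filter_upwards [hkey] with j h1
      have h2 : |F (θ j)| = A j := by
        have h3 : |F (θ j)| ^ k = A j ^ k := by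
          rw [← abs_pow, h1, abs_mul, abs_pow, abs_of_pos (hApos j)]
          rcases hσ1 with h | h <;> rw [h] <;> norm_num
        exact (pow_left_strictMonoOn₀ hkne).injOn (abs_nonneg (F (θ j))) (hApos j).le h3
      exact abs_eq (hApos j).le |>.mp h2
    obtain ⟨sgn, hfr⟩ : ∃ sgn : ℝ, ∃ᶠ j in atTop, F (θ j) = sgn * A j := by
      rcases frequently_or_distrib.mp habs.frequently with h | h
      · exact ⟨1, by simpa using h⟩
      · refine ⟨-1, ?_⟩
        apply h.mono
        intro j hj
        rw [hj]; ring
    -- define h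
    set h : ℝ → ℝ := fun x => Finv (sgn * (x ^ m * ρ (x ^ k))) with hh_def
    have hψ_an : AnalyticAt ℝ (fun x : ℝ => sgn * (x ^ m * ρ (x ^ k))) 0 := by
      apply analyticAt_const.mul
      apply (analyticAt_id.pow m).mul
      have h1 : AnalyticAt ℝ ρ ((0 : ℝ) ^ k) := by rwa [zero_pow hkne]
      have h2 : AnalyticAt ℝ (fun x : ℝ => x ^ k) 0 := analyticAt_id.pow k
      exact AnalyticAt.comp (f := fun x : ℝ => x ^ k) (x := (0:ℝ)) h1 h2
    have hψ0 : sgn * ((0 : ℝ) ^ m * ρ ((0 : ℝ) ^ k)) = 0 := by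
      rw [zero_pow (by omega : m ≠ 0)]
      ring
    have hh_an : AnalyticAt ℝ h 0 := by
      have h5 : AnalyticAt ℝ Finv (sgn * ((0 : ℝ) ^ m * ρ ((0 : ℝ) ^ k))) := by
        rw [hψ0]; exact hFinv_an
      rw [hh_def]
      exact AnalyticAt.comp (f := fun x : ℝ => sgn * (x ^ m * ρ (x ^ k))) (x := (0:ℝ)) h5 hψ_an
    obtain ⟨ε, hε, hball⟩ : ∃ ε > 0, ∀ y : ℝ, dist y 0 < ε → AnalyticAt ℝ h y :=
      Metric.eventually_nhds_iff.mp hh_an.eventually_analyticAt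
    refine ⟨h, ε, hε, ?_, ?_⟩
    · intro y hy
      apply hball
      rw [Real.dist_eq, sub_zero]
      exact abs_lt.mpr ⟨hy.1, hy.2⟩
    · have hevall : ∀ᶠ j in atTop,
        Finv (F (θ j)) = θ j ∧ t j ^ ((k : ℝ)⁻¹) ∈ Set.Ioo (-ε) ε :=
        (hθ.eventually hFinv_eq).and (htk.eventually (Ioo_mem_nhds (by linarith) hε))
      obtain ⟨φ, hφ, hP⟩ := Filter.extraction_of_frequently_atTop (hfr.and_eventually hevall)
      refine ⟨φ, hφ, fun n => ⟨(hP n).2.2, ?_⟩⟩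
      obtain ⟨h1, h2, h3⟩ := hP n
      rw [hh_def]
      simp only
      rw [hsk (φ n)]
      rw [show (t (φ n) ^ ((k : ℝ)⁻¹)) ^ m * ρ (t (φ n)) = A (φ n) from rfl, ← h1, h2]
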